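/- Strong group incentive ratio upper bound for Probabilistic Serial: for every coalition size c ≥ 1 the following holds. Let there be n agents and m divisible goods, let v_1, …, v_n be additive valuations, let ≻ be a profile of strict orderings with v_a consistent with ≻_a for every a, let C ⊆ [n] be a coalition with |C| ≤ c, and let ≻'_C be manipulated orderings reported by the agents in C. If v_a(PS_a(≻)) ≤ v_a(PS_a(≻'_C, ≻_{−C})) for every a ∈ C, then v_a(PS_a(≻'_C, ≻_{−C})) ≤ (c + 1)·v_a(PS_a(≻)) for every a ∈ C. -/

import Mathlib

/-- A strict total ordering over goods, given as a list from most preferred to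
least preferred: it must be a duplicate-free enumeration of all goods. -/
def IsOrder {γ : Type*} [Fintype γ] (l : List γ) : Prop :=
  l.Nodup ∧ ∀ g : γ, g ∈ l

/-- An additive valuation `v` (given by its values on single goods) is consistent
with the strict ordering `l` if strictly more valuable goods appear earlier. -/
def Consistent {γ : Type*} [DecidableEq γ] (v : γ → ℝ) (l : List γ) : Prop :=
  ∀ g g' : γ, v g > v g' → l.idxOf g < l.idxOf g'

/-- Agent `a`'s most preferred good in the set `S` of available goods. -/
def psTop {n m : ℕ} (pref : Fin n → List (Fin m)) (S : Finset (Fin m)) (a : Fin n) :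
    Option (Fin m) :=
  (pref a).find? (fun g => decide (g ∈ S))

/-- `N(g, S)`: the set of agents whose most preferred available good is `g`. -/
def psN {n m : ℕ} (pref : Fin n → List (Fin m)) (S : Finset (Fin m)) (g : Fin m) :
    Finset (Fin n) :=
  Finset.univ.filter (fun a => psTop pref S a = some g)

/-- The available goods currently being eaten by at least one agent. -/
def psActive {n m : ℕ} (pref : Fin n → List (Fin m)) (S : Finset (Fin m)) :
    Finset (Fin m) :=
  S.filter (fun g => (psN pref S g).Nonempty)

open scoped Classical in
/-- Combinatorial implementation of Probabilistic Serial.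
`psState pref k = (S⁽ᵏ⁾, x⁽ᵏ⁾, t⁽ᵏ⁾)`: after step `k`, the set of available
goods, the partial allocation, and the length `t⁽ᵏ⁾` of step `k` (with `t⁽⁰⁾ = 0`). -/
noncomputable def psState {n m : ℕ} (pref : Fin n → List (Fin m)) :
    ℕ → Finset (Fin m) × (Fin n → Fin m → ℝ) × ℝ
  | 0 => (Finset.univ, fun _ _ => 0, 0)
  | k + 1 =>
    let st := psState pref k
    let tg : Fin m → ℝ := fun g => (1 - ∑ a, st.2.1 a g) / ((psN pref st.1 g).card : ℝ)
    if h : (psActive pref st.1).Nonempty then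
      let t := (psActive pref st.1).inf' h tg
      (st.1.filter (fun g => ¬(g ∈ psActive pref st.1 ∧ tg g = t)),
        fun a g => if psTop pref st.1 a = some g then st.2.1 a g + t else st.2.1 a g,
        t)
    else st

/-- The fractional allocation output by Probabilistic Serial (the mechanism
terminates after at most `m` steps, since each step fully consumes a good). -/
noncomputable def psAlloc {n m : ℕ} (pref : Fin n → List (Fin m)) :
    Fin n → Fin m → ℝ :=
  (psState pref m).2.1

namespace PS15

open Finset

/-- find? minimality wrt indexOf -/
lemma find?_min {α : Type*} [DecidableEq α] (p : α → Bool) :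
    ∀ (l : List α) (x y : α), l.find? p = some x → y ∈ l → p y → l.idxOf x ≤ l.idxOf y := by
  intro l
  induction l with
  | nil => simp
  | cons h t ih =>
    intro x y hf hy hp
    by_cases hh : p h
    · rw [List.find?_cons_of_pos hh] at hf
      obtain rfl : h = x := by injection hf
      simp
    · rw [List.find?_cons_of_neg hh] at hf
      have hpx : p x := List.find?_some hf
      have hxh : x ≠ h := fun e => hh (e ▸ hpx)
      have hyh : y ≠ h := fun e => hh (e ▸ hp)
      have hyt : y ∈ t := by
        rcases List.mem_cons.1 hy with e | e
        · exact absurd e hyh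
        · exact e
      rw [List.idxOf_cons_ne _ (Ne.symm hxh), List.idxOf_cons_ne _ (Ne.symm hyh)]
      exact Nat.succ_le_succ (ih x y hf hyt hp)

section Run

variable {n m : ℕ}

noncomputable def runS (pref : Fin n → List (Fin m)) (k : ℕ) : Finset (Fin m) :=
  (psState pref k).1

noncomputable def runX (pref : Fin n → List (Fin m)) (k : ℕ) : Fin n → Fin m → ℝ :=
  (psState pref k).2.1

noncomputable def massOf (pref : Fin n → List (Fin m)) (k : ℕ) (g : Fin m) : ℝ :=
  ∑ a, runX pref k a g

noncomputable def tgF (pref : Fin n → List (Fin m)) (k : ℕ) (g : Fin m) : ℝ :=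
  (1 - massOf pref k g) / ((psN pref (runS pref k) g).card : ℝ)

noncomputable def lenStep (pref : Fin n → List (Fin m)) (k : ℕ) : ℝ :=
  if h : (psActive pref (runS pref k)).Nonempty then
    (psActive pref (runS pref k)).inf' h (tgF pref k)
  else 0

noncomputable def tau (pref : Fin n → List (Fin m)) : ℕ → ℝ
  | 0 => 0
  | k + 1 => tau pref k + lenStep pref k

variable (pref : Fin n → List (Fin m))

lemma runS_zero : runS pref 0 = Finset.univ := rfl
lemma runX_zero (a : Fin n) (g : Fin m) : runX pref 0 a g = 0 := rfl
lemma massOf_zero (g : Fin m) : massOf pref 0 g = 0 := by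
  simp [massOf, runX_zero]

lemma lenStep_eq {k : ℕ} (h : (psActive pref (runS pref k)).Nonempty) :
    lenStep pref k = (psActive pref (runS pref k)).inf' h (tgF pref k) := dif_pos h

lemma lenStep_eq_zero {k : ℕ} (h : ¬(psActive pref (runS pref k)).Nonempty) :
    lenStep pref k = 0 := dif_neg h

lemma state_frozen {k : ℕ} (h : ¬(psActive pref (runS pref k)).Nonempty) :
    psState pref (k + 1) = psState pref k := by
  have h' : ¬(psActive pref (psState pref k).1).Nonempty := h
  rw [psState, dif_neg h']

lemma mem_runS_succ {k : ℕ} (h : (psActive pref (runS pref k)).Nonempty) (g : Fin m) :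
    g ∈ runS pref (k + 1) ↔ g ∈ runS pref k ∧
      ¬(g ∈ psActive pref (runS pref k) ∧ tgF pref k g = lenStep pref k) := by
  have h' : (psActive pref (psState pref k).1).Nonempty := h
  have hl : ((psActive pref (psState pref k).1).inf' h' fun g =>
      (1 - ∑ a, (psState pref k).2.1 a g) / ((psN pref (psState pref k).1 g).card : ℝ))
      = lenStep pref k := by
    rw [lenStep_eq pref h]; rfl
  show g ∈ (psState pref (k+1)).1 ↔ _
  rw [psState, dif_pos h']
  simp only [Finset.mem_filter, hl]
  rfl

lemma runX_succ {k : ℕ} (h : (psActive pref (runS pref k)).Nonempty) (a : Fin n) (g : Fin m) :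
    runX pref (k + 1) a g = if psTop pref (runS pref k) a = some g then
      runX pref k a g + lenStep pref k else runX pref k a g := by
  have h' : (psActive pref (psState pref k).1).Nonempty := h
  have hl : ((psActive pref (psState pref k).1).inf' h' fun g =>
      (1 - ∑ a, (psState pref k).2.1 a g) / ((psN pref (psState pref k).1 g).card : ℝ))
      = lenStep pref k := by
    rw [lenStep_eq pref h]; rfl
  show (psState pref (k+1)).2.1 a g = _
  rw [psState, dif_pos h']
  simp only [hl]
  rfl

lemma runX_succ' {k : ℕ} (a : Fin n) (g : Fin m) :
    runX pref (k + 1) a g = if (psActive pref (runS pref k)).Nonempty ∧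
        psTop pref (runS pref k) a = some g then
      runX pref k a g + lenStep pref k else runX pref k a g := by
  by_cases h : (psActive pref (runS pref k)).Nonempty
  · rw [runX_succ pref h]
    by_cases ht : psTop pref (runS pref k) a = some g <;> simp [h, ht]
  · have : runX pref (k+1) a g = runX pref k a g := by
      show (psState pref (k+1)).2.1 a g = _
      rw [state_frozen pref h]; rfl
    simp [h, this]

end Run

end PS15
namespace PS15
section Run2
open Finset
variable {n m : ℕ} (pref : Fin n → List (Fin m))

lemma psTop_mem {S : Finset (Fin m)} {a : Fin n} {g : Fin m}
    (h : psTop pref S a = some g) : g ∈ S := by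
  have := List.find?_some h
  simpa using this

lemma psTop_exists (hord : ∀ a, IsOrder (pref a)) {S : Finset (Fin m)} (a : Fin n)
    (hS : S.Nonempty) : ∃ g, psTop pref S a = some g := by
  obtain ⟨g, hg⟩ := hS
  have : ((pref a).find? (fun g => decide (g ∈ S))).isSome := by
    rw [List.find?_isSome]
    exact ⟨g, (hord a).2 g, by simpa using hg⟩
  exact Option.isSome_iff_exists.1 this

lemma psTop_min (hord : ∀ a, IsOrder (pref a)) {S : Finset (Fin m)} {a : Fin n} {g g' : Fin m}
    (h : psTop pref S a = some g) (hg' : g' ∈ S) :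
    (pref a).idxOf g ≤ (pref a).idxOf g' :=
  find?_min _ _ _ _ h ((hord a).2 g') (by simpa using hg')

lemma psTop_congr {pref' : Fin n → List (Fin m)} {S : Finset (Fin m)} {b : Fin n}
    (h : pref' b = pref b) : psTop pref' S b = psTop pref S b := by
  simp [psTop, h]

lemma psN_empty_of_not_mem {S : Finset (Fin m)} {g : Fin m} (h : g ∉ S) :
    psN pref S g = ∅ := by
  ext a
  simp only [psN, Finset.mem_filter, Finset.mem_univ, true_and, Finset.notMem_empty,
    iff_false]
  intro hc
  exact h (psTop_mem pref hc)

lemma active_sub {S : Finset (Fin m)} {g : Fin m} (h : g ∈ psActive pref S) : g ∈ S :=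
  (Finset.mem_filter.1 h).1

lemma psN_nonempty_of_active {S : Finset (Fin m)} {g : Fin m} (h : g ∈ psActive pref S) :
    (psN pref S g).Nonempty := (Finset.mem_filter.1 h).2

lemma sum_ite_top (g : Fin m) (S : Finset (Fin m)) (r : ℝ) :
    (∑ a : Fin n, if psTop pref S a = some g then r else 0)
      = ((psN pref S g).card : ℝ) * r := by
  classical
  rw [← Finset.sum_filter]
  have : Finset.univ.filter (fun a => psTop pref S a = some g) = psN pref S g := rfl
  rw [this, Finset.sum_const, nsmul_eq_mul]

lemma massOf_succ_active {k : ℕ} (h : (psActive pref (runS pref k)).Nonempty) (g : Fin m) :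
    massOf pref (k + 1) g = massOf pref k g
      + ((psN pref (runS pref k) g).card : ℝ) * lenStep pref k := by
  unfold massOf
  have hh : ∀ a : Fin n, runX pref (k+1) a g
      = runX pref k a g + (if psTop pref (runS pref k) a = some g then lenStep pref k else 0) := by
    intro a
    rw [runX_succ pref h]
    by_cases ht : psTop pref (runS pref k) a = some g <;> simp [ht]
  rw [Finset.sum_congr rfl (fun a _ => hh a), Finset.sum_add_distrib, sum_ite_top]

lemma runS_frozen {k : ℕ} (h : ¬(psActive pref (runS pref k)).Nonempty) :
    runS pref (k + 1) = runS pref k := by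
  unfold runS; rw [state_frozen pref h]

lemma runX_frozen {k : ℕ} (h : ¬(psActive pref (runS pref k)).Nonempty) :
    runX pref (k + 1) = runX pref k := by
  unfold runX; rw [state_frozen pref h]

lemma massOf_frozen {k : ℕ} (h : ¬(psActive pref (runS pref k)).Nonempty) (g : Fin m) :
    massOf pref (k + 1) g = massOf pref k g := by
  unfold massOf; rw [runX_frozen pref h]

/-- The main invariants, by induction on `k`. -/
theorem inv (hord : ∀ a, IsOrder (pref a)) : ∀ k : ℕ,
    (∀ a g, 0 ≤ runX pref k a g) ∧
    (∀ g ∈ runS pref k, massOf pref k g < 1) ∧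
    (∀ g, g ∉ runS pref k → massOf pref k g = 1) ∧
    (∀ a, ∑ g, runX pref k a g = tau pref k) := by
  intro k
  induction k with
  | zero =>
    refine ⟨fun a g => le_refl _, ?_, ?_, ?_⟩
    · intro g _; rw [massOf_zero]; norm_num
    · intro g hg; exact absurd (Finset.mem_univ g) hg
    · intro a; simp [runX_zero, tau]
  | succ k ih =>
    obtain ⟨ihpos, ihlt, ihdead, ihrow⟩ := ih
    by_cases hact : (psActive pref (runS pref k)).Nonempty
    · -- active step
      have hcardpos : ∀ g ∈ psActive pref (runS pref k),
          (0:ℝ) < ((psN pref (runS pref k) g).card : ℝ) := by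
        intro g hg
        exact_mod_cast Finset.card_pos.2 (psN_nonempty_of_active pref hg)
      have htg_pos : ∀ g ∈ psActive pref (runS pref k), 0 < tgF pref k g := by
        intro g hg
        exact div_pos (by linarith [ihlt g (active_sub pref hg)]) (hcardpos g hg)
      have hlen_pos : 0 < lenStep pref k := by
        rw [lenStep_eq pref hact, Finset.lt_inf'_iff]
        exact htg_pos
      have hlen_le : ∀ g ∈ psActive pref (runS pref k), lenStep pref k ≤ tgF pref k g := by
        intro g hg
        rw [lenStep_eq pref hact]
        exact Finset.inf'_le _ hg
      have hSne : (runS pref k).Nonempty := by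
        obtain ⟨g, hg⟩ := hact
        exact ⟨g, active_sub pref hg⟩
      refine ⟨?_, ?_, ?_, ?_⟩
      · intro a g
        rw [runX_succ pref hact]
        by_cases ht : psTop pref (runS pref k) a = some g
        · simp only [ht, if_pos]
          have := ihpos a g
          linarith
        · simp only [ht, if_neg, if_false]
          exact ihpos a g
      · -- aliveLt
        intro g hg
        rw [mem_runS_succ pref hact] at hg
        obtain ⟨hgS, hgnot⟩ := hg
        rw [massOf_succ_active pref hact]
        by_cases hA : g ∈ psActive pref (runS pref k)
        · have hne : tgF pref k g ≠ lenStep pref k := fun e => hgnot ⟨hA, e⟩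
          have hlt : lenStep pref k < tgF pref k g := lt_of_le_of_ne (hlen_le g hA) (Ne.symm hne)
          have hcard : (0:ℝ) < ((psN pref (runS pref k) g).card : ℝ) := hcardpos g hA
          have : ((psN pref (runS pref k) g).card : ℝ) * lenStep pref k
              < ((psN pref (runS pref k) g).card : ℝ) * tgF pref k g :=
            (mul_lt_mul_iff_right₀ hcard).2 hlt
          have htgval : ((psN pref (runS pref k) g).card : ℝ) * tgF pref k g
              = 1 - massOf pref k g := by
            unfold tgF
            field_simp
          linarith
        · have : psN pref (runS pref k) g = ∅ := by
            by_contra hne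
            exact hA (Finset.mem_filter.2 ⟨hgS, Finset.nonempty_of_ne_empty hne⟩)
          rw [this]
          simpa using ihlt g hgS
      · -- deadEq
        intro g hg
        by_cases hgS : g ∈ runS pref k
        · rw [mem_runS_succ pref hact] at hg
          push_neg at hg
          obtain ⟨hA, htg⟩ := hg hgS
          rw [massOf_succ_active pref hact, ← htg]
          have hcard : ((psN pref (runS pref k) g).card : ℝ) ≠ 0 :=
            ne_of_gt (hcardpos g hA)
          unfold tgF
          field_simp
          ring
        · rw [massOf_succ_active pref hact, psN_empty_of_not_mem pref hgS]
          simpa using ihdead g hgS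
      · -- rowSum
        intro a
        obtain ⟨g₀, hg₀⟩ := psTop_exists pref hord a hSne
        have hh : ∀ g : Fin m, runX pref (k+1) a g
            = runX pref k a g + (if psTop pref (runS pref k) a = some g then lenStep pref k else 0) := by
          intro g
          rw [runX_succ pref hact]
          by_cases ht : psTop pref (runS pref k) a = some g <;> simp [ht]
        rw [Finset.sum_congr rfl (fun g _ => hh g), Finset.sum_add_distrib, ihrow a]
        have : (∑ g : Fin m, if psTop pref (runS pref k) a = some g then lenStep pref k else 0)
            = lenStep pref k := by
          rw [Finset.sum_congr rfl (fun g _ => by rw [hg₀])]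
          simp [Finset.sum_ite_eq]
        rw [this]
        rfl
    · -- frozen step
      have hX := runX_frozen pref hact
      have hS := runS_frozen pref hact
      have hlen := lenStep_eq_zero pref hact
      refine ⟨?_, ?_, ?_, ?_⟩
      · intro a g; rw [hX]; exact ihpos a g
      · intro g hg; rw [massOf_frozen pref hact]; exact ihlt g (hS ▸ hg)
      · intro g hg; rw [massOf_frozen pref hact]; exact ihdead g (hS ▸ hg)
      · intro a
        rw [hX]
        show _ = tau pref k + lenStep pref k
        rw [hlen, add_zero]
        exact ihrow a

end Run2
end PS15
namespace PS15
section Run3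
open Finset
variable {n m : ℕ} (pref : Fin n → List (Fin m))

lemma runX_nonneg (hord : ∀ a, IsOrder (pref a)) (k : ℕ) (a : Fin n) (g : Fin m) :
    0 ≤ runX pref k a g := (inv pref hord k).1 a g

lemma massOf_lt_one (hord : ∀ a, IsOrder (pref a)) {k : ℕ} {g : Fin m} (h : g ∈ runS pref k) :
    massOf pref k g < 1 := (inv pref hord k).2.1 g h

lemma massOf_dead (hord : ∀ a, IsOrder (pref a)) {k : ℕ} {g : Fin m} (h : g ∉ runS pref k) :
    massOf pref k g = 1 := (inv pref hord k).2.2.1 g h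

lemma rowSum (hord : ∀ a, IsOrder (pref a)) (k : ℕ) (a : Fin n) :
    ∑ g, runX pref k a g = tau pref k := (inv pref hord k).2.2.2 a

lemma mem_runS_iff (hord : ∀ a, IsOrder (pref a)) {k : ℕ} {g : Fin m} :
    g ∈ runS pref k ↔ massOf pref k g < 1 := by
  constructor
  · exact massOf_lt_one pref hord
  · intro h
    by_contra hc
    rw [massOf_dead pref hord hc] at h
    exact lt_irrefl _ h

lemma massOf_le_one (hord : ∀ a, IsOrder (pref a)) (k : ℕ) (g : Fin m) :
    massOf pref k g ≤ 1 := by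
  by_cases h : g ∈ runS pref k
  · exact le_of_lt (massOf_lt_one pref hord h)
  · exact le_of_eq (massOf_dead pref hord h)

lemma lenStep_pos (hord : ∀ a, IsOrder (pref a)) {k : ℕ}
    (hact : (psActive pref (runS pref k)).Nonempty) : 0 < lenStep pref k := by
  rw [lenStep_eq pref hact, Finset.lt_inf'_iff]
  intro g hg
  have h1 : massOf pref k g < 1 := massOf_lt_one pref hord (active_sub pref hg)
  have h2 : (0:ℝ) < ((psN pref (runS pref k) g).card : ℝ) := by
    exact_mod_cast Finset.card_pos.2 (psN_nonempty_of_active pref hg)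
  exact div_pos (by linarith) h2

lemma lenStep_nonneg (hord : ∀ a, IsOrder (pref a)) (k : ℕ) : 0 ≤ lenStep pref k := by
  by_cases hact : (psActive pref (runS pref k)).Nonempty
  · exact le_of_lt (lenStep_pos pref hord hact)
  · rw [lenStep_eq_zero pref hact]

lemma tau_mono (hord : ∀ a, IsOrder (pref a)) : Monotone (tau pref) := by
  apply monotone_nat_of_le_succ
  intro k
  show tau pref k ≤ tau pref k + lenStep pref k
  linarith [lenStep_nonneg pref hord k]

lemma tau_nonneg (hord : ∀ a, IsOrder (pref a)) (k : ℕ) : 0 ≤ tau pref k := by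
  have : tau pref 0 = 0 := rfl
  have := tau_mono pref hord (Nat.zero_le k)
  simpa [tau] using this

lemma runX_succ_ge (hord : ∀ a, IsOrder (pref a)) (k : ℕ) (a : Fin n) (g : Fin m) :
    runX pref k a g + lenStep pref k *
      (if psTop pref (runS pref k) a = some g then (1:ℝ) else 0) ≤ runX pref (k+1) a g := by
  rw [runX_succ' pref]
  by_cases hact : (psActive pref (runS pref k)).Nonempty
  · by_cases ht : psTop pref (runS pref k) a = some g
    · simp [hact, ht]
    · simp [hact, ht]
  · rw [lenStep_eq_zero pref hact]
    simp [hact]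

lemma runX_le_succ (hord : ∀ a, IsOrder (pref a)) (k : ℕ) (a : Fin n) (g : Fin m) :
    runX pref k a g ≤ runX pref (k+1) a g := by
  refine le_trans ?_ (runX_succ_ge pref hord k a g)
  have := lenStep_nonneg pref hord k
  by_cases ht : psTop pref (runS pref k) a = some g <;> simp [ht] <;> linarith

lemma runX_mono (hord : ∀ a, IsOrder (pref a)) {k k' : ℕ} (h : k ≤ k') (a : Fin n) (g : Fin m) :
    runX pref k a g ≤ runX pref k' a g := by
  induction k' with
  | zero =>
    have hk0 : k = 0 := Nat.le_zero.1 h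
    subst hk0; exact le_refl _
  | succ k' ih =>
    rcases Nat.lt_or_ge k (k'+1) with hlt | hge
    · exact le_trans (ih (by omega)) (runX_le_succ pref hord k' a g)
    · have : k = k' + 1 := by omega
      subst this; rfl

lemma runS_antitone_succ {k : ℕ} {g : Fin m} (h : g ∈ runS pref (k+1)) : g ∈ runS pref k := by
  by_cases hact : (psActive pref (runS pref k)).Nonempty
  · exact ((mem_runS_succ pref hact g).1 h).1
  · rwa [runS_frozen pref hact] at h

lemma runS_antitone {k k' : ℕ} (h : k ≤ k') {g : Fin m} (hg : g ∈ runS pref k') :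
    g ∈ runS pref k := by
  induction k' with
  | zero => have : k = 0 := by omega
            subst this; exact hg
  | succ k' ih =>
    rcases Nat.lt_or_ge k (k'+1) with hlt | hge
    · exact ih (by omega) (runS_antitone_succ pref hg)
    · have : k = k' + 1 := by omega
      subst this; exact hg

lemma massOf_succ_ge (hord : ∀ a, IsOrder (pref a)) (k : ℕ) (g : Fin m) :
    massOf pref k g + ((psN pref (runS pref k) g).card : ℝ) * lenStep pref k
      ≤ massOf pref (k+1) g := by
  by_cases hact : (psActive pref (runS pref k)).Nonempty
  · rw [massOf_succ_active pref hact]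
  · rw [massOf_frozen pref hact, lenStep_eq_zero pref hact]
    simp

lemma active_nonempty (hord : ∀ a, IsOrder (pref a)) (hn : 0 < n) {k : ℕ}
    (hS : (runS pref k).Nonempty) : (psActive pref (runS pref k)).Nonempty := by
  obtain ⟨g₀, hg₀⟩ := psTop_exists pref hord ⟨0, hn⟩ hS
  refine ⟨g₀, Finset.mem_filter.2 ⟨psTop_mem pref hg₀, ⟨⟨0, hn⟩, ?_⟩⟩⟩
  simp [psN, hg₀]

lemma card_decr (hord : ∀ a, IsOrder (pref a)) (hn : 0 < n) {k : ℕ}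
    (hS : (runS pref k).Nonempty) : (runS pref (k+1)).card < (runS pref k).card := by
  have hact := active_nonempty pref hord hn hS
  obtain ⟨gm, hgm, hinf⟩ := Finset.exists_mem_eq_inf' hact (tgF pref k)
  have hlen : tgF pref k gm = lenStep pref k := by rw [lenStep_eq pref hact, hinf]
  have hnot : gm ∉ runS pref (k+1) := by
    rw [mem_runS_succ pref hact]
    push_neg
    intro _
    exact ⟨hgm, hlen⟩
  apply Finset.card_lt_card
  constructor
  · intro g hg; exact runS_antitone_succ pref hg
  · intro hsub
    exact hnot (hsub (active_sub pref hgm))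

lemma runS_final (hord : ∀ a, IsOrder (pref a)) (hn : 0 < n) : runS pref m = ∅ := by
  have key : ∀ k : ℕ, (runS pref k).card ≤ m - k := by
    intro k
    induction k with
    | zero =>
      have : (runS pref 0).card = m := by
        rw [runS_zero]; simp
      omega
    | succ k ih =>
      by_cases hS : (runS pref k).Nonempty
      · have := card_decr pref hord hn hS
        omega
      · have he : runS pref k = ∅ := Finset.not_nonempty_iff_eq_empty.1 hS
        have hact : ¬(psActive pref (runS pref k)).Nonempty := by
          rw [he]
          simp [psActive]
        rw [runS_frozen pref hact, he]
        simp
    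
  have := key m
  simp at this
  exact this

lemma tau_final (hord : ∀ a, IsOrder (pref a)) (hn : 0 < n) :
    tau pref m = (m : ℝ) / (n : ℝ) := by
  have h1 : ∑ a : Fin n, ∑ g, runX pref m a g = (n : ℝ) * tau pref m := by
    rw [Finset.sum_congr rfl (fun a _ => rowSum pref hord m a)]
    simp [mul_comm]
  have h2 : ∑ a : Fin n, ∑ g, runX pref m a g = (m : ℝ) := by
    rw [Finset.sum_comm]
    have : ∀ g : Fin m, ∑ a, runX pref m a g = 1 := by
      intro g
      exact massOf_dead pref hord (by rw [runS_final pref hord hn]; simp)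
    rw [Finset.sum_congr rfl (fun g _ => this g)]
    simp
  have hn' : (n:ℝ) ≠ 0 := by positivity
  have h3 : (n:ℝ) * tau pref m = m := by rw [← h1, h2]
  field_simp
  linarith

-- ### time layer

open scoped Classical in
noncomputable def sIdx (t : ℝ) : ℕ := Nat.findGreatest (fun k => tau pref k ≤ t) m

noncomputable def rate (k : ℕ) (a : Fin n) (g : Fin m) : ℝ :=
  if psTop pref (runS pref k) a = some g then 1 else 0

noncomputable def xAt (a : Fin n) (g : Fin m) (t : ℝ) : ℝ :=
  runX pref (sIdx pref t) a g + (t - tau pref (sIdx pref t)) * rate pref (sIdx pref t) a g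

noncomputable def mAt (g : Fin m) (t : ℝ) : ℝ := ∑ a, xAt pref a g t

lemma sIdx_le (t : ℝ) : sIdx pref t ≤ m := Nat.findGreatest_le m

lemma tau_sIdx_le {t : ℝ} (ht : 0 ≤ t) : tau pref (sIdx pref t) ≤ t := by
  classical
  have h0 : tau pref 0 ≤ t := by simpa [tau] using ht
  have h := Nat.findGreatest_spec (P := fun k => tau pref k ≤ t) (Nat.zero_le m) h0
  exact h

lemma le_sIdx {t : ℝ} {k : ℕ} (hk : k ≤ m) (h : tau pref k ≤ t) : k ≤ sIdx pref t := by
  classical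
  exact Nat.le_findGreatest hk h

lemma lt_tau_succ (hord : ∀ a, IsOrder (pref a)) {t : ℝ} (hlt : sIdx pref t < m) :
    t < tau pref (sIdx pref t + 1) := by
  by_contra hc
  push_neg at hc
  have := le_sIdx pref (by omega : sIdx pref t + 1 ≤ m) hc
  omega

lemma sIdx_eq (hord : ∀ a, IsOrder (pref a)) {t : ℝ} {k : ℕ} (hk : k < m)
    (h1 : tau pref k ≤ t) (h2 : t < tau pref (k+1)) : sIdx pref t = k := by
  have hle : k ≤ sIdx pref t := le_sIdx pref (le_of_lt hk) h1
  by_contra hc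
  have hlt : k < sIdx pref t := by omega
  have : tau pref (k+1) ≤ tau pref (sIdx pref t) := tau_mono pref hord (by omega)
  have : tau pref (sIdx pref t) ≤ t := tau_sIdx_le pref (le_trans (tau_nonneg pref hord k) h1)
  linarith [tau_mono pref hord (show k+1 ≤ sIdx pref t by omega)]

lemma sIdx_eq_m (hord : ∀ a, IsOrder (pref a)) {t : ℝ} (h : tau pref m ≤ t) :
    sIdx pref t = m := by
  have := le_sIdx pref (le_refl m) h
  have := sIdx_le pref t
  omega

lemma rate_nonneg (k : ℕ) (a : Fin n) (g : Fin m) : 0 ≤ rate pref k a g := by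
  unfold rate; split <;> norm_num

lemma xAt_nonneg (hord : ∀ a, IsOrder (pref a)) (a : Fin n) (g : Fin m) {t : ℝ} (ht : 0 ≤ t) :
    0 ≤ xAt pref a g t := by
  unfold xAt
  have h1 := runX_nonneg pref hord (sIdx pref t) a g
  have h2 := tau_sIdx_le pref ht
  have h3 := rate_nonneg pref (sIdx pref t) a g
  nlinarith

lemma mAt_eq (g : Fin m) (t : ℝ) :
    mAt pref g t = massOf pref (sIdx pref t) g
      + (t - tau pref (sIdx pref t)) * ((psN pref (runS pref (sIdx pref t)) g).card : ℝ) := by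
  unfold mAt xAt massOf rate
  rw [Finset.sum_add_distrib]
  congr 1
  rw [← Finset.mul_sum, sum_ite_top]
  ring

lemma runX_const_of_tau_eq (hord : ∀ a, IsOrder (pref a)) {k j : ℕ} (hkj : k ≤ j)
    (htau : tau pref j = tau pref k) : runX pref j = runX pref k := by
  induction j with
  | zero => have : k = 0 := by omega
            subst this; rfl
  | succ j ih =>
    rcases Nat.lt_or_ge k (j+1) with hlt | hge
    · have h1 : tau pref k ≤ tau pref j := tau_mono pref hord (by omega)
      have h2 : tau pref j ≤ tau pref (j+1) := tau_mono pref hord (by omega)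
      have hlen : lenStep pref j = 0 := by
        have : tau pref (j+1) = tau pref j + lenStep pref j := rfl
        rw [this] at htau
        linarith
      have hXj : runX pref j = runX pref k := ih (by omega) (by linarith [htau])
      funext a g
      rw [runX_succ' pref, hlen]
      split <;> simp [hXj]
    · have : k = j + 1 := by omega
      subst this; rfl

lemma xAt_tau (hord : ∀ a, IsOrder (pref a)) {k : ℕ} (hk : k ≤ m) (a : Fin n) (g : Fin m) :
    xAt pref a g (tau pref k) = runX pref k a g := by
  set j := sIdx pref (tau pref k) with hj
  have hkle : k ≤ j := le_sIdx pref hk (le_refl _)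
  have h1 : tau pref j ≤ tau pref k := tau_sIdx_le pref (tau_nonneg pref hord k)
  have h2 : tau pref k ≤ tau pref j := tau_mono pref hord hkle
  have heq : tau pref j = tau pref k := le_antisymm h1 h2
  unfold xAt
  rw [← hj, heq, runX_const_of_tau_eq pref hord hkle heq]
  ring

lemma mAt_tau (hord : ∀ a, IsOrder (pref a)) {k : ℕ} (hk : k ≤ m) (g : Fin m) :
    mAt pref g (tau pref k) = massOf pref k g := by
  unfold mAt massOf
  exact Finset.sum_congr rfl (fun a _ => xAt_tau pref hord hk a g)

end Run3
end PS15
namespace PS15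
section Run4
open Finset
variable {n m : ℕ} (pref : Fin n → List (Fin m))

lemma sum_rate_le_one (k : ℕ) (a : Fin n) : ∑ g, rate pref k a g ≤ 1 := by
  unfold rate
  rcases h : psTop pref (runS pref k) a with _ | g₀ <;>
    simp [h, Finset.sum_ite_eq]

lemma sum_rate_nonneg (k : ℕ) (a : Fin n) : 0 ≤ ∑ g, rate pref k a g :=
  Finset.sum_nonneg (fun g _ => rate_nonneg pref k a g)

lemma xAt_sum_le (hord : ∀ a, IsOrder (pref a)) (a : Fin n) {t : ℝ} (ht : 0 ≤ t) :
    ∑ g, xAt pref a g t ≤ t := by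
  unfold xAt
  rw [Finset.sum_add_distrib, rowSum pref hord, ← Finset.mul_sum]
  have h1 := tau_sIdx_le pref ht
  have h2 := sum_rate_le_one pref (sIdx pref t) a
  have h3 := sum_rate_nonneg pref (sIdx pref t) a
  nlinarith

lemma rate_le_one (k : ℕ) (a : Fin n) (g : Fin m) : rate pref k a g ≤ 1 := by
  unfold rate; split <;> norm_num

lemma xAt_mono (hord : ∀ a, IsOrder (pref a)) (a : Fin n) (g : Fin m) {t₁ t₂ : ℝ}
    (h0 : 0 ≤ t₁) (h12 : t₁ ≤ t₂) : xAt pref a g t₁ ≤ xAt pref a g t₂ := by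
  have h0' : (0:ℝ) ≤ t₂ := le_trans h0 h12
  have hj : sIdx pref t₁ ≤ sIdx pref t₂ :=
    le_sIdx pref (sIdx_le pref t₁) (le_trans (tau_sIdx_le pref h0) h12)
  rcases eq_or_lt_of_le hj with he | hlt
  · unfold xAt
    rw [← he]
    have := rate_nonneg pref (sIdx pref t₁) a g
    nlinarith
  · have hm : sIdx pref t₁ < m := lt_of_lt_of_le hlt (sIdx_le pref t₂)
    have ht1 : t₁ < tau pref (sIdx pref t₁ + 1) := lt_tau_succ pref hord hm
    have hlen : tau pref (sIdx pref t₁ + 1) = tau pref (sIdx pref t₁) + lenStep pref (sIdx pref t₁) := rfl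
    have step1 : xAt pref a g t₁ ≤ runX pref (sIdx pref t₁ + 1) a g := by
      unfold xAt
      have hr0 := rate_nonneg pref (sIdx pref t₁) a g
      have hd : t₁ - tau pref (sIdx pref t₁) ≤ lenStep pref (sIdx pref t₁) := by linarith
      have := mul_le_mul_of_nonneg_right hd hr0
      have hge := runX_succ_ge pref hord (sIdx pref t₁) a g
      unfold rate at *
      linarith
    have step2 : runX pref (sIdx pref t₁ + 1) a g ≤ runX pref (sIdx pref t₂) a g :=
      runX_mono pref hord (by omega) a g
    have step3 : runX pref (sIdx pref t₂) a g ≤ xAt pref a g t₂ := by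
      unfold xAt
      have := mul_nonneg (by linarith [tau_sIdx_le pref h0'] : (0:ℝ) ≤ t₂ - tau pref (sIdx pref t₂))
        (rate_nonneg pref (sIdx pref t₂) a g)
      linarith
    linarith

lemma mAt_mono (hord : ∀ a, IsOrder (pref a)) (g : Fin m) {t₁ t₂ : ℝ}
    (h0 : 0 ≤ t₁) (h12 : t₁ ≤ t₂) : mAt pref g t₁ ≤ mAt pref g t₂ :=
  Finset.sum_le_sum (fun a _ => xAt_mono pref hord a g h0 h12)

lemma mAt_nonneg (hord : ∀ a, IsOrder (pref a)) (g : Fin m) {t : ℝ} (ht : 0 ≤ t) :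
    0 ≤ mAt pref g t :=
  Finset.sum_nonneg (fun a _ => xAt_nonneg pref hord a g ht)

lemma mAt_le_one (hord : ∀ a, IsOrder (pref a)) (hn : 0 < n) (g : Fin m) {t : ℝ}
    (ht : 0 ≤ t) : mAt pref g t ≤ 1 := by
  rw [mAt_eq]
  by_cases hj : sIdx pref t = m
  · rw [hj]
    have hS : runS pref m = ∅ := runS_final pref hord hn
    have : psN pref (runS pref m) g = ∅ := by
      apply psN_empty_of_not_mem
      rw [hS]; exact Finset.notMem_empty g
    rw [this]
    simpa using massOf_le_one pref hord m g
  · have hm : sIdx pref t < m := lt_of_le_of_ne (sIdx_le pref t) hj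
    have ht1 : t < tau pref (sIdx pref t + 1) := lt_tau_succ pref hord hm
    have hlen : tau pref (sIdx pref t + 1) = tau pref (sIdx pref t) + lenStep pref (sIdx pref t) := rfl
    have hcard : (0:ℝ) ≤ ((psN pref (runS pref (sIdx pref t)) g).card : ℝ) := by positivity
    have hd : t - tau pref (sIdx pref t) ≤ lenStep pref (sIdx pref t) := by linarith
    have h2 := massOf_succ_ge pref hord (sIdx pref t) g
    have h3 := massOf_le_one pref hord (sIdx pref t + 1) g
    nlinarith [mul_le_mul_of_nonneg_left hd hcard]

lemma alive_sIdx (hord : ∀ a, IsOrder (pref a)) {g : Fin m} {t : ℝ}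
    (ht : 0 ≤ t) (h : mAt pref g t < 1) : g ∈ runS pref (sIdx pref t) := by
  rw [mem_runS_iff pref hord]
  rw [mAt_eq] at h
  have hcard : (0:ℝ) ≤ ((psN pref (runS pref (sIdx pref t)) g).card : ℝ) := by positivity
  nlinarith [mul_nonneg (by linarith [tau_sIdx_le pref ht] : (0:ℝ) ≤ t - tau pref (sIdx pref t)) hcard]

lemma sIdx_congr (hord : ∀ a, IsOrder (pref a)) {t₁ t : ℝ} (h0 : 0 ≤ t₁) (h1 : t₁ ≤ t)
    (hfree : ∀ k ≤ m, tau pref k ≤ t → tau pref k ≤ t₁) : sIdx pref t = sIdx pref t₁ := by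
  have h0' : (0:ℝ) ≤ t := le_trans h0 h1
  apply le_antisymm
  · exact le_sIdx pref (sIdx_le pref t)
      (hfree _ (sIdx_le pref t) (tau_sIdx_le pref h0'))
  · exact le_sIdx pref (sIdx_le pref t₁) (le_trans (tau_sIdx_le pref h0) h1)

lemma xAt_formula (hord : ∀ a, IsOrder (pref a)) {t₁ t : ℝ} (h0 : 0 ≤ t₁) (h1 : t₁ ≤ t)
    (hfree : ∀ k ≤ m, tau pref k ≤ t → tau pref k ≤ t₁) (a : Fin n) (g : Fin m) :
    xAt pref a g t = runX pref (sIdx pref t₁) a g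
      + (t - tau pref (sIdx pref t₁)) * rate pref (sIdx pref t₁) a g := by
  unfold xAt
  rw [sIdx_congr pref hord h0 h1 hfree]

lemma mAt_formula (hord : ∀ a, IsOrder (pref a)) {t₁ t : ℝ} (h0 : 0 ≤ t₁) (h1 : t₁ ≤ t)
    (hfree : ∀ k ≤ m, tau pref k ≤ t → tau pref k ≤ t₁) (g : Fin m) :
    mAt pref g t = massOf pref (sIdx pref t₁) g
      + (t - tau pref (sIdx pref t₁)) * ((psN pref (runS pref (sIdx pref t₁)) g).card : ℝ) := by
  rw [mAt_eq, sIdx_congr pref hord h0 h1 hfree]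

end Run4
end PS15
namespace PS15
section Deficit
open Finset
open scoped Classical
variable {n m : ℕ} (pref pref' : Fin n → List (Fin m))

noncomputable def deficit (t : ℝ) : ℝ := ∑ g, max 0 (mAt pref g t - mAt pref' g t)

variable {pref pref'}

lemma core
    (hord : ∀ a, IsOrder (pref a)) (hord' : ∀ a, IsOrder (pref' a)) (hn : 0 < n)
    (C : Finset (Fin n)) (hhon : ∀ b ∉ C, pref' b = pref b)
    {t₁ t₂ : ℝ} (h0 : 0 ≤ t₁) (h12 : t₁ < t₂) (hlt : t₁ < tau pref m)
    (hfree : ∀ k ≤ m, tau pref k ≤ t₂ → tau pref k ≤ t₁)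
    (hfree' : ∀ k ≤ m, tau pref' k ≤ t₂ → tau pref' k ≤ t₁) :
    deficit pref pref' t₂ ≤ deficit pref pref' t₁ + (C.card : ℝ) * (t₂ - t₁) := by
  have h02 : (0:ℝ) ≤ t₂ := le_trans h0 (le_of_lt h12)
  have htm : tau pref m = (m:ℝ)/n := tau_final pref hord hn
  have htm' : tau pref' m = (m:ℝ)/n := tau_final pref' hord' hn
  have hlt' : t₁ < tau pref' m := by rw [htm']; rw [htm] at hlt; exact hlt
  have hτj : tau pref (sIdx pref t₁) ≤ t₁ := tau_sIdx_le pref h0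
  have hτj' : tau pref' (sIdx pref' t₁) ≤ t₁ := tau_sIdx_le pref' h0
  have hjm : sIdx pref t₁ < m := by
    rcases lt_or_eq_of_le (sIdx_le pref t₁) with h | h
    · exact h
    · exfalso; rw [h] at hτj; linarith
  have hj'm : sIdx pref' t₁ < m := by
    rcases lt_or_eq_of_le (sIdx_le pref' t₁) with h | h
    · exact h
    · exfalso; rw [h] at hτj'; linarith
  have ht2a : t₂ < tau pref (sIdx pref t₁ + 1) := by
    by_contra hc
    push_neg at hc
    have := hfree _ (by omega : sIdx pref t₁ + 1 ≤ m) hc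
    linarith [lt_tau_succ pref hord hjm]
  have ht2b : t₂ < tau pref' (sIdx pref' t₁ + 1) := by
    by_contra hc
    push_neg at hc
    have := hfree' _ (by omega : sIdx pref' t₁ + 1 ≤ m) hc
    linarith [lt_tau_succ pref' hord' hj'm]
  have hfree2 : ∀ k ≤ m, tau pref k ≤ t₂ → tau pref k ≤ t₁ := hfree
  have EA2 : ∀ g, mAt pref g t₂ = massOf pref (sIdx pref t₁) g
      + (t₂ - tau pref (sIdx pref t₁)) * ((psN pref (runS pref (sIdx pref t₁)) g).card : ℝ) :=
    fun g => mAt_formula pref hord h0 (le_of_lt h12) hfree g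
  have EA2' : ∀ g, mAt pref' g t₂ = massOf pref' (sIdx pref' t₁) g
      + (t₂ - tau pref' (sIdx pref' t₁)) * ((psN pref' (runS pref' (sIdx pref' t₁)) g).card : ℝ) :=
    fun g => mAt_formula pref' hord' h0 (le_of_lt h12) hfree' g
  have EB1 : ∀ g, mAt pref g t₁ = massOf pref (sIdx pref t₁) g
      + (t₁ - tau pref (sIdx pref t₁)) * ((psN pref (runS pref (sIdx pref t₁)) g).card : ℝ) :=
    fun g => mAt_eq pref g t₁
  have EB1' : ∀ g, mAt pref' g t₁ = massOf pref' (sIdx pref' t₁) g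
      + (t₁ - tau pref' (sIdx pref' t₁)) * ((psN pref' (runS pref' (sIdx pref' t₁)) g).card : ℝ) :=
    fun g => mAt_eq pref' g t₁
  set P : Finset (Fin m) := Finset.univ.filter (fun g => mAt pref' g t₂ < mAt pref g t₂) with hPdef
  -- Step A : per-good bound
  have keyA : deficit pref pref' t₂ - deficit pref pref' t₁
      ≤ (t₂ - t₁) * ∑ g ∈ P, (((psN pref (runS pref (sIdx pref t₁)) g).card : ℝ)
          - ((psN pref' (runS pref' (sIdx pref' t₁)) g).card : ℝ)) := by
    have hper : ∀ g, max 0 (mAt pref g t₂ - mAt pref' g t₂)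
        - max 0 (mAt pref g t₁ - mAt pref' g t₁)
        ≤ (if g ∈ P then (t₂ - t₁) * (((psN pref (runS pref (sIdx pref t₁)) g).card : ℝ)
            - ((psN pref' (runS pref' (sIdx pref' t₁)) g).card : ℝ)) else 0) := by
      intro g
      have hdiff : (mAt pref g t₂ - mAt pref' g t₂) - (mAt pref g t₁ - mAt pref' g t₁)
          = (t₂ - t₁) * (((psN pref (runS pref (sIdx pref t₁)) g).card : ℝ)
            - ((psN pref' (runS pref' (sIdx pref' t₁)) g).card : ℝ)) := by
        rw [EA2 g, EA2' g, EB1 g, EB1' g]; ring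
      by_cases hg : g ∈ P
      · rw [if_pos hg]
        have h2 : mAt pref' g t₂ < mAt pref g t₂ := (Finset.mem_filter.1 hg).2
        have hmax2 : max 0 (mAt pref g t₂ - mAt pref' g t₂) = mAt pref g t₂ - mAt pref' g t₂ :=
          max_eq_right (by linarith)
        have hmax1 : mAt pref g t₁ - mAt pref' g t₁ ≤ max 0 (mAt pref g t₁ - mAt pref' g t₁) :=
          le_max_right _ _
        linarith
      · rw [if_neg hg]
        have h2 : ¬ (mAt pref' g t₂ < mAt pref g t₂) := fun hh =>
          hg (Finset.mem_filter.2 ⟨Finset.mem_univ g, hh⟩)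
        push_neg at h2
        have hmax2 : max 0 (mAt pref g t₂ - mAt pref' g t₂) = 0 := max_eq_left (by linarith)
        have hmax1 : (0:ℝ) ≤ max 0 (mAt pref g t₁ - mAt pref' g t₁) := le_max_left _ _
        linarith
    calc deficit pref pref' t₂ - deficit pref pref' t₁
        = ∑ g, (max 0 (mAt pref g t₂ - mAt pref' g t₂)
            - max 0 (mAt pref g t₁ - mAt pref' g t₁)) := by
          rw [deficit, deficit, ← Finset.sum_sub_distrib]
      _ ≤ ∑ g, (if g ∈ P then (t₂ - t₁) * (((psN pref (runS pref (sIdx pref t₁)) g).card : ℝ)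
            - ((psN pref' (runS pref' (sIdx pref' t₁)) g).card : ℝ)) else 0) :=
          Finset.sum_le_sum (fun g _ => hper g)
      _ = ∑ g ∈ P, (t₂ - t₁) * (((psN pref (runS pref (sIdx pref t₁)) g).card : ℝ)
            - ((psN pref' (runS pref' (sIdx pref' t₁)) g).card : ℝ)) := by
          rw [Finset.sum_ite_mem]
          congr 1
          simp
      _ = (t₂ - t₁) * ∑ g ∈ P, (((psN pref (runS pref (sIdx pref t₁)) g).card : ℝ)
            - ((psN pref' (runS pref' (sIdx pref' t₁)) g).card : ℝ)) := by
          rw [Finset.mul_sum]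
  -- the mapping claim
  have hmapping : ∀ (b : Fin n) (g : Fin m), psTop pref (runS pref (sIdx pref t₁)) b = some g →
      g ∈ P → ∃ g'', psTop pref (runS pref' (sIdx pref' t₁)) b = some g'' ∧ g'' ∈ P := by
    intro b g hg hgP
    have hgS1 : g ∈ runS pref (sIdx pref t₁) := psTop_mem pref hg
    have hP2 : mAt pref' g t₂ < mAt pref g t₂ := (Finset.mem_filter.1 hgP).2
    have hle1 : mAt pref g t₂ ≤ 1 := mAt_le_one pref hord hn g h02
    have hmass2 : massOf pref' (sIdx pref' t₁) g ≤ mAt pref' g t₁ := by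
      rw [EB1' g]
      have : (0:ℝ) ≤ (t₁ - tau pref' (sIdx pref' t₁))
          * ((psN pref' (runS pref' (sIdx pref' t₁)) g).card : ℝ) :=
        mul_nonneg (by linarith) (by positivity)
      linarith
    have hmono' : mAt pref' g t₁ ≤ mAt pref' g t₂ := mAt_mono pref' hord' g h0 (le_of_lt h12)
    have hgS2 : g ∈ runS pref' (sIdx pref' t₁) := by
      rw [mem_runS_iff pref' hord']
      linarith
    obtain ⟨g'', hg''⟩ := psTop_exists pref hord b ⟨g, hgS2⟩
    by_cases he : g'' = g
    · subst he
      exact ⟨g'', hg'', hgP⟩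
    · have hidx : (pref b).idxOf g'' ≤ (pref b).idxOf g := psTop_min pref hord hg'' hgS2
      have hg''S1 : g'' ∉ runS pref (sIdx pref t₁) := by
        intro hmem
        have h2 := psTop_min pref hord hg hmem
        have heq : (pref b).idxOf g'' = (pref b).idxOf g := le_antisymm hidx h2
        exact he ((List.idxOf_inj ((hord b).2 g'')).1 heq)
      have hdead : massOf pref (sIdx pref t₁) g'' = 1 := massOf_dead pref hord hg''S1
      have hmAt1 : mAt pref g'' t₂ = 1 := by
        rw [EA2 g'', psN_empty_of_not_mem pref hg''S1, hdead]
        simp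
      have hg''S2 : g'' ∈ runS pref' (sIdx pref' t₁) := psTop_mem pref hg''
      have halive : massOf pref' (sIdx pref' t₁) g'' < 1 := massOf_lt_one pref' hord' hg''S2
      have hmAt2 : mAt pref' g'' t₂ < 1 := by
        rw [EA2' g'']
        rcases Nat.eq_zero_or_pos (psN pref' (runS pref' (sIdx pref' t₁)) g'').card with hz | hpos
        · rw [hz]
          simpa using halive
        · have h1 : t₂ - tau pref' (sIdx pref' t₁) < lenStep pref' (sIdx pref' t₁) := by
            have hrfl : tau pref' (sIdx pref' t₁ + 1)
                = tau pref' (sIdx pref' t₁) + lenStep pref' (sIdx pref' t₁) := rfl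
            linarith [ht2b, hrfl ▸ ht2b]
          have h2 := massOf_succ_ge pref' hord' (sIdx pref' t₁) g''
          have h3 := massOf_le_one pref' hord' (sIdx pref' t₁ + 1) g''
          have hcpos : (0:ℝ) < ((psN pref' (runS pref' (sIdx pref' t₁)) g'').card : ℝ) := by
            exact_mod_cast hpos
          nlinarith [mul_lt_mul_of_pos_right h1 hcpos]
      exact ⟨g'', hg'', Finset.mem_filter.2 ⟨Finset.mem_univ _, by linarith⟩⟩
  -- Step B : the combinatorial bound
  have keyB : ∑ g ∈ P, (((psN pref (runS pref (sIdx pref t₁)) g).card : ℝ)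
      - ((psN pref' (runS pref' (sIdx pref' t₁)) g).card : ℝ)) ≤ (C.card : ℝ) := by
    have hrep : ∀ g, ((psN pref (runS pref (sIdx pref t₁)) g).card : ℝ)
        = ∑ b, (if psTop pref (runS pref (sIdx pref t₁)) b = some g then (1:ℝ) else 0) := by
      intro g
      rw [sum_ite_top]
      ring
    have hrep' : ∀ g, ((psN pref' (runS pref' (sIdx pref' t₁)) g).card : ℝ)
        = ∑ b, (if psTop pref' (runS pref' (sIdx pref' t₁)) b = some g then (1:ℝ) else 0) := by
      intro g
      rw [sum_ite_top]
      ring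
    have hswap : ∑ g ∈ P, ((psN pref (runS pref (sIdx pref t₁)) g).card : ℝ)
        = ∑ b, ∑ g ∈ P, (if psTop pref (runS pref (sIdx pref t₁)) b = some g then (1:ℝ) else 0) := by
      rw [Finset.sum_congr rfl (fun g _ => hrep g), Finset.sum_comm]
    have hswap' : ∑ g ∈ P, ((psN pref' (runS pref' (sIdx pref' t₁)) g).card : ℝ)
        = ∑ b, ∑ g ∈ P, (if psTop pref' (runS pref' (sIdx pref' t₁)) b = some g then (1:ℝ) else 0) := by
      rw [Finset.sum_congr rfl (fun g _ => hrep' g), Finset.sum_comm]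
    have hle1 : ∀ b, (∑ g ∈ P, (if psTop pref (runS pref (sIdx pref t₁)) b = some g
        then (1:ℝ) else 0)) ≤ 1 := by
      intro b
      rcases h : psTop pref (runS pref (sIdx pref t₁)) b with _ | g₀
      · simp [h]
      · simp only [h, Option.some.injEq]
        rw [Finset.sum_ite_eq P g₀ (fun _ => (1:ℝ))]
        split <;> norm_num
    have hnn' : ∀ b, (0:ℝ) ≤ ∑ g ∈ P, (if psTop pref' (runS pref' (sIdx pref' t₁)) b = some g
        then (1:ℝ) else 0) := by
      intro b
      apply Finset.sum_nonneg
      intro g _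
      split <;> norm_num
    have hmap : ∀ b ∉ C, (∑ g ∈ P, (if psTop pref (runS pref (sIdx pref t₁)) b = some g
        then (1:ℝ) else 0)) ≤ ∑ g ∈ P, (if psTop pref' (runS pref' (sIdx pref' t₁)) b = some g
        then (1:ℝ) else 0) := by
      intro b hb
      rcases h : psTop pref (runS pref (sIdx pref t₁)) b with _ | g₀
      · have hz : (∑ g ∈ P, (if (none : Option (Fin m)) = some g then (1:ℝ) else 0)) = 0 := by
          apply Finset.sum_eq_zero
          intro g _
          simp
        rw [hz]
        exact hnn' b
      · simp only [h, Option.some.injEq]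
        rw [Finset.sum_ite_eq P g₀ (fun _ => (1:ℝ))]
        by_cases hgP : g₀ ∈ P
        · rw [if_pos hgP]
          obtain ⟨g'', hg'', hg''P⟩ := hmapping b g₀ h hgP
          have htop' : psTop pref' (runS pref' (sIdx pref' t₁)) b = some g'' := by
            rw [psTop_congr pref (hhon b hb)]
            exact hg''
          calc (1:ℝ) = ∑ g ∈ P, (if g'' = g then (1:ℝ) else 0) := by
                rw [Finset.sum_ite_eq P g'' (fun _ => (1:ℝ)), if_pos hg''P]
            _ ≤ ∑ g ∈ P, (if psTop pref' (runS pref' (sIdx pref' t₁)) b = some g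
                then (1:ℝ) else 0) := by
                apply Finset.sum_le_sum
                intro g _
                rw [htop']
                simp only [Option.some.injEq]
                exact le_refl _
        · rw [if_neg hgP]
          exact hnn' b
    rw [Finset.sum_sub_distrib, hswap, hswap', ← Finset.sum_sub_distrib]
    calc ∑ b, ((∑ g ∈ P, (if psTop pref (runS pref (sIdx pref t₁)) b = some g then (1:ℝ) else 0))
          - ∑ g ∈ P, (if psTop pref' (runS pref' (sIdx pref' t₁)) b = some g then (1:ℝ) else 0))
        = (∑ b ∈ C, ((∑ g ∈ P, (if psTop pref (runS pref (sIdx pref t₁)) b = some g then (1:ℝ) else 0))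
          - ∑ g ∈ P, (if psTop pref' (runS pref' (sIdx pref' t₁)) b = some g then (1:ℝ) else 0)))
          + ∑ b ∈ Cᶜ, ((∑ g ∈ P, (if psTop pref (runS pref (sIdx pref t₁)) b = some g then (1:ℝ) else 0))
          - ∑ g ∈ P, (if psTop pref' (runS pref' (sIdx pref' t₁)) b = some g then (1:ℝ) else 0)) := by
          rw [Finset.sum_add_sum_compl]
      _ ≤ (∑ b ∈ C, (1:ℝ)) + 0 := by
          apply add_le_add
          · apply Finset.sum_le_sum
            intro b _
            linarith [hle1 b, hnn' b]
          · apply Finset.sum_nonpos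
            intro b hb
            have hbC : b ∉ C := by simpa using hb
            linarith [hmap b hbC]
      _ ≤ (C.card : ℝ) := by simp
  have hfin : (t₂ - t₁) * ∑ g ∈ P, (((psN pref (runS pref (sIdx pref t₁)) g).card : ℝ)
      - ((psN pref' (runS pref' (sIdx pref' t₁)) g).card : ℝ)) ≤ (t₂ - t₁) * (C.card : ℝ) :=
    mul_le_mul_of_nonneg_left keyB (by linarith)
  have : (t₂ - t₁) * (C.card : ℝ) = (C.card : ℝ) * (t₂ - t₁) := by ring
  linarith [keyA, hfin]

end Deficit
end PS15
namespace PS15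
section DL
open Finset
open scoped Classical
variable {n m : ℕ} {pref pref' : Fin n → List (Fin m)}

lemma xAt_sum_eq (hord : ∀ a, IsOrder (pref a)) (hn : 0 < n) (a : Fin n) {t : ℝ}
    (h0 : 0 ≤ t) (hm : t ≤ tau pref m) : ∑ g, xAt pref a g t = t := by
  unfold xAt
  rw [Finset.sum_add_distrib, rowSum pref hord, ← Finset.mul_sum]
  rcases eq_or_lt_of_le (tau_sIdx_le pref h0) with he | hlt2
  · rw [he]; ring
  · have hSne : (runS pref (sIdx pref t)).Nonempty := by
      by_contra hc
      have he : runS pref (sIdx pref t) = ∅ := Finset.not_nonempty_iff_eq_empty.1 hc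
      have h1 : ∀ g, massOf pref (sIdx pref t) g = 1 := fun g =>
        massOf_dead pref hord (by rw [he]; exact Finset.notMem_empty g)
      have h2 : ∑ g, massOf pref (sIdx pref t) g = (m:ℝ) := by
        rw [Finset.sum_congr rfl fun g _ => h1 g]; simp
      have h3 : ∑ g, massOf pref (sIdx pref t) g = (n:ℝ) * tau pref (sIdx pref t) := by
        unfold massOf
        rw [Finset.sum_comm, Finset.sum_congr rfl (fun a' _ => rowSum pref hord _ a')]
        simp [mul_comm]
      have h4 : (n:ℝ) * tau pref m = m := by
        rw [tau_final pref hord hn]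
        field_simp
      have hn' : (0:ℝ) < n := by exact_mod_cast hn
      have h5 : tau pref (sIdx pref t) = tau pref m := by
        nlinarith
      linarith [h5 ▸ hlt2]
    obtain ⟨g₀, hg₀⟩ := psTop_exists pref hord a hSne
    have hone : ∑ g, rate pref (sIdx pref t) a g = 1 := by
      unfold rate
      simp only [hg₀, Option.some.injEq]
      rw [Finset.sum_ite_eq]
      simp
    rw [hone]; ring

lemma xAt_incr_le (hord : ∀ a, IsOrder (pref a)) (hn : 0 < n) (a : Fin n) (g : Fin m)
    {t₁ t₂ : ℝ} (h0 : 0 ≤ t₁) (h12 : t₁ ≤ t₂) (hm : t₂ ≤ tau pref m) :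
    xAt pref a g t₂ - xAt pref a g t₁ ≤ t₂ - t₁ := by
  have h02 : (0:ℝ) ≤ t₂ := le_trans h0 h12
  have hs1 := xAt_sum_eq hord hn a h0 (le_trans h12 hm)
  have hs2 := xAt_sum_eq hord hn a h02 hm
  have hsub : ∑ g', (xAt pref a g' t₂ - xAt pref a g' t₁) = t₂ - t₁ := by
    rw [Finset.sum_sub_distrib, hs1, hs2]
  have hnn : ∀ g' ∈ Finset.univ, (0:ℝ) ≤ xAt pref a g' t₂ - xAt pref a g' t₁ := by
    intro g' _
    linarith [xAt_mono pref hord a g' h0 h12]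
  calc xAt pref a g t₂ - xAt pref a g t₁
      ≤ ∑ g', (xAt pref a g' t₂ - xAt pref a g' t₁) :=
        Finset.single_le_sum hnn (Finset.mem_univ g)
    _ = t₂ - t₁ := hsub

lemma mAt_incr_le (hord : ∀ a, IsOrder (pref a)) (hn : 0 < n) (g : Fin m)
    {t₁ t₂ : ℝ} (h0 : 0 ≤ t₁) (h12 : t₁ ≤ t₂) (hm : t₂ ≤ tau pref m) :
    mAt pref g t₂ - mAt pref g t₁ ≤ (n:ℝ) * (t₂ - t₁) := by
  unfold mAt
  rw [← Finset.sum_sub_distrib]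
  calc ∑ a, (xAt pref a g t₂ - xAt pref a g t₁) ≤ ∑ _a : Fin n, (t₂ - t₁) :=
        Finset.sum_le_sum (fun a _ => xAt_incr_le hord hn a g h0 h12 hm)
    _ = (n:ℝ) * (t₂ - t₁) := by simp [mul_comm]; ring

lemma deficit_zero' (hord : ∀ a, IsOrder (pref a)) (hord' : ∀ a, IsOrder (pref' a)) :
    deficit pref pref' 0 = 0 := by
  unfold deficit
  apply Finset.sum_eq_zero
  intro g _
  have h1 : mAt pref g 0 = 0 := by
    have h := mAt_tau pref hord (Nat.zero_le m) g
    have ht0 : tau pref 0 = 0 := rfl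
    rw [ht0] at h
    rw [h, massOf_zero]
  have h2 : mAt pref' g 0 = 0 := by
    have h := mAt_tau pref' hord' (Nat.zero_le m) g
    have ht0 : tau pref' 0 = 0 := rfl
    rw [ht0] at h
    rw [h, massOf_zero]
  rw [h1, h2]
  simp

noncomputable def gridd (pref pref' : Fin n → List (Fin m)) : Finset ℝ :=
  ((Finset.range (m+1)).image (tau pref)) ∪ ((Finset.range (m+1)).image (tau pref'))

lemma zero_mem_gridd : (0:ℝ) ∈ gridd pref pref' := by
  apply Finset.mem_union_left
  apply Finset.mem_image.2
  exact ⟨0, Finset.mem_range.2 (by omega), rfl⟩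

lemma tau_mem_gridd {k : ℕ} (hk : k ≤ m) : tau pref k ∈ gridd pref pref' := by
  apply Finset.mem_union_left
  exact Finset.mem_image.2 ⟨k, Finset.mem_range.2 (by omega), rfl⟩

lemma tau'_mem_gridd {k : ℕ} (hk : k ≤ m) : tau pref' k ∈ gridd pref pref' := by
  apply Finset.mem_union_right
  exact Finset.mem_image.2 ⟨k, Finset.mem_range.2 (by omega), rfl⟩

lemma deficit_le
    (hord : ∀ a, IsOrder (pref a)) (hord' : ∀ a, IsOrder (pref' a)) (hn : 0 < n)
    (C : Finset (Fin n)) (hhon : ∀ b ∉ C, pref' b = pref b) :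
    ∀ T : ℝ, 0 ≤ T → T ≤ tau pref m → deficit pref pref' T ≤ (C.card : ℝ) * T := by
  suffices H : ∀ (N : ℕ) (T : ℝ), ((gridd pref pref').filter (fun s => s < T)).card ≤ N →
      0 ≤ T → T ≤ tau pref m → deficit pref pref' T ≤ (C.card : ℝ) * T by
    exact fun T h1 h2 => H _ T (le_refl _) h1 h2
  intro N
  induction N with
  | zero =>
    intro T hcard h0 hTm
    rcases eq_or_lt_of_le h0 with he | hpos
    · rw [← he, deficit_zero' hord hord']
      simp
    · exfalso
      have hmem : (0:ℝ) ∈ (gridd pref pref').filter (fun s => s < T) :=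
        Finset.mem_filter.2 ⟨zero_mem_gridd, hpos⟩
      have := Finset.card_pos.2 ⟨0, hmem⟩
      omega
  | succ N ih =>
    intro T hcard h0 hTm
    rcases eq_or_lt_of_le h0 with he | hpos
    · rw [← he, deficit_zero' hord hord']
      simp
    · have hF0 : (0:ℝ) ∈ (gridd pref pref').filter (fun s => s < T) :=
        Finset.mem_filter.2 ⟨zero_mem_gridd, hpos⟩
      have hFne : ((gridd pref pref').filter (fun s => s < T)).Nonempty := ⟨0, hF0⟩
      set t' := ((gridd pref pref').filter (fun s => s < T)).max' hFne with ht'def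
      have ht'mem := Finset.max'_mem _ hFne
      have ht'grid : t' ∈ gridd pref pref' := (Finset.mem_filter.1 ht'mem).1
      have ht'lt : t' < T := (Finset.mem_filter.1 ht'mem).2
      have ht'0 : 0 ≤ t' := Finset.le_max' _ 0 hF0
      have ht'm : t' < tau pref m := lt_of_lt_of_le ht'lt hTm
      have hcard' : ((gridd pref pref').filter (fun s => s < t')).card ≤ N := by
        have h1 : (gridd pref pref').filter (fun s => s < t')
            ⊆ ((gridd pref pref').filter (fun s => s < T)).erase t' := by
          intro s hs
          have hs1 := Finset.mem_filter.1 hs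
          apply Finset.mem_erase.2
          exact ⟨ne_of_lt hs1.2, Finset.mem_filter.2 ⟨hs1.1, lt_trans hs1.2 ht'lt⟩⟩
        have h2 := Finset.card_le_card h1
        rw [Finset.card_erase_of_mem ht'mem] at h2
        omega
      have hDt' : deficit pref pref' t' ≤ (C.card : ℝ) * t' :=
        ih t' hcard' ht'0 (le_of_lt ht'm)
      -- interior core bound
      have hcore : ∀ t : ℝ, t' < t → t < T →
          deficit pref pref' t ≤ deficit pref pref' t' + (C.card : ℝ) * (t - t') := by
        intro t h1 h2
        apply core hord hord' hn C hhon ht'0 h1 ht'm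
        · intro k hk hkt
          by_contra hc
          push_neg at hc
          have hmem : tau pref k ∈ (gridd pref pref').filter (fun s => s < T) :=
            Finset.mem_filter.2 ⟨tau_mem_gridd hk, lt_of_le_of_lt hkt h2⟩
          have := Finset.le_max' _ _ hmem
          rw [← ht'def] at this
          linarith
        · intro k hk hkt
          by_contra hc
          push_neg at hc
          have hmem : tau pref' k ∈ (gridd pref pref').filter (fun s => s < T) :=
            Finset.mem_filter.2 ⟨tau'_mem_gridd hk, lt_of_le_of_lt hkt h2⟩
          have := Finset.le_max' _ _ hmem
          rw [← ht'def] at this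
          linarith
      -- epsilon argument
      have hstep : deficit pref pref' T ≤ deficit pref pref' t' + (C.card : ℝ) * (T - t') := by
        apply le_of_forall_pos_le_add
        intro ε hε
        have hnm1 : (0:ℝ) < (n:ℝ) * m + 1 := by positivity
        set δ : ℝ := min ((T - t')/2) (ε / ((n:ℝ) * m + 1)) with hδdef
        have hδpos : 0 < δ := lt_min (by linarith) (div_pos hε hnm1)
        have hδle : δ ≤ (T - t')/2 := min_le_left _ _
        have hδle2 : δ ≤ ε / ((n:ℝ) * m + 1) := min_le_right _ _
        have h1 : t' < T - δ := by linarith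
        have h2 : T - δ < T := by linarith
        have h0' : 0 ≤ T - δ := by linarith
        have hmid : deficit pref pref' (T - δ) ≤ deficit pref pref' t'
            + (C.card : ℝ) * ((T - δ) - t') := hcore (T - δ) h1 h2
        -- Lipschitz step
        have hlip : deficit pref pref' T ≤ deficit pref pref' (T - δ) + (m:ℝ) * ((n:ℝ) * δ) := by
          unfold deficit
          have hper : ∀ g : Fin m, max 0 (mAt pref g T - mAt pref' g T)
              ≤ max 0 (mAt pref g (T-δ) - mAt pref' g (T-δ)) + (n:ℝ) * δ := by
            intro g
            have hd1 : mAt pref g T - mAt pref g (T-δ) ≤ (n:ℝ) * δ := by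
              have := mAt_incr_le hord hn g h0' (by linarith : T - δ ≤ T) hTm
              have hh : (n:ℝ) * (T - (T - δ)) = (n:ℝ) * δ := by ring
              linarith [hh ▸ this]
            have hd2 : 0 ≤ mAt pref' g T - mAt pref' g (T-δ) := by
              linarith [mAt_mono pref' hord' g h0' (by linarith : T - δ ≤ T)]
            apply max_le
            · have : (0:ℝ) ≤ max 0 (mAt pref g (T-δ) - mAt pref' g (T-δ)) := le_max_left _ _
              positivity
            · have := le_max_right 0 (mAt pref g (T-δ) - mAt pref' g (T-δ))
              linarith
          calc ∑ g, max 0 (mAt pref g T - mAt pref' g T)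
              ≤ ∑ g : Fin m, (max 0 (mAt pref g (T-δ) - mAt pref' g (T-δ)) + (n:ℝ) * δ) :=
                Finset.sum_le_sum (fun g _ => hper g)
            _ = (∑ g, max 0 (mAt pref g (T-δ) - mAt pref' g (T-δ))) + (m:ℝ) * ((n:ℝ) * δ) := by
                rw [Finset.sum_add_distrib]
                simp [mul_comm]
        have hnmδ : (m:ℝ) * ((n:ℝ) * δ) ≤ ε := by
          have : ((n:ℝ) * m + 1) * δ ≤ ε := by
            calc ((n:ℝ) * m + 1) * δ ≤ ((n:ℝ) * m + 1) * (ε / ((n:ℝ) * m + 1)) :=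
                  mul_le_mul_of_nonneg_left hδle2 (by positivity)
              _ = ε := by field_simp
          nlinarith [hδpos]
        have hCd : (C.card : ℝ) * ((T - δ) - t') ≤ (C.card : ℝ) * (T - t') := by
          apply mul_le_mul_of_nonneg_left (by linarith) (by positivity)
        linarith
      calc deficit pref pref' T ≤ deficit pref pref' t' + (C.card : ℝ) * (T - t') := hstep
        _ ≤ (C.card : ℝ) * t' + (C.card : ℝ) * (T - t') := by linarith
        _ = (C.card : ℝ) * T := by ring

end DL
end PS15
namespace PS15
section Final
open Finset
open scoped Classical
variable {n m : ℕ} (pref : Fin n → List (Fin m))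

noncomputable def deathStep (hord : ∀ a, IsOrder (pref a)) (hn : 0 < n) (g : Fin m) : ℕ :=
  Nat.find (show ∃ k, g ∉ runS pref k from
    ⟨m, by rw [runS_final pref hord hn]; exact Finset.notMem_empty g⟩)

lemma not_mem_at_death (hord : ∀ a, IsOrder (pref a)) (hn : 0 < n) (g : Fin m) :
    g ∉ runS pref (deathStep pref hord hn g) := by
  exact Nat.find_spec (show ∃ k, g ∉ runS pref k from
    ⟨m, by rw [runS_final pref hord hn]; exact Finset.notMem_empty g⟩)

lemma mem_before_death (hord : ∀ a, IsOrder (pref a)) (hn : 0 < n) (g : Fin m) {k : ℕ}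
    (h : k < deathStep pref hord hn g) : g ∈ runS pref k := by
  by_contra hc
  unfold deathStep at h
  exact (Nat.find_min _ h) hc

lemma deathStep_le (hord : ∀ a, IsOrder (pref a)) (hn : 0 < n) (g : Fin m) :
    deathStep pref hord hn g ≤ m := by
  unfold deathStep
  exact Nat.find_le (by rw [runS_final pref hord hn]; exact Finset.notMem_empty g)

def Hset (σ : Equiv.Perm (Fin m)) (j : ℕ) : Finset (Fin m) :=
  (Finset.univ.filter (fun i : Fin m => (i:ℕ) ≤ j)).image σ

noncomputable def stepT (hord : ∀ a, IsOrder (pref a)) (hn : 0 < n)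
    (σ : Equiv.Perm (Fin m)) (j : ℕ) : ℕ :=
  (Hset σ j).sup (deathStep pref hord hn)

lemma stepT_le_m (hord : ∀ a, IsOrder (pref a)) (hn : 0 < n) (σ : Equiv.Perm (Fin m)) (j : ℕ) :
    stepT pref hord hn σ j ≤ m :=
  Finset.sup_le (fun g _ => deathStep_le pref hord hn g)

lemma stepT_mono (hord : ∀ a, IsOrder (pref a)) (hn : 0 < n) (σ : Equiv.Perm (Fin m))
    {j j' : ℕ} (h : j ≤ j') : stepT pref hord hn σ j ≤ stepT pref hord hn σ j' := by
  apply Finset.sup_mono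
  apply Finset.image_subset_image
  apply Finset.monotone_filter_right
  intro i _ hi
  exact le_trans hi h

noncomputable def wD (u : Fin m → ℝ) (σ : Equiv.Perm (Fin m)) (j : ℕ) : ℝ :=
  if h : j < m then u (σ ⟨j, h⟩) else 0

lemma tele (u : Fin m → ℝ) (σ : Equiv.Perm (Fin m)) (i : ℕ) (hi : i ≤ m) :
    ∑ j ∈ Finset.Ico i m, (wD u σ j - wD u σ (j+1)) = wD u σ i := by
  rw [Finset.sum_Ico_eq_sum_range]
  have h := Finset.sum_range_sub' (f := fun l => wD u σ (i + l)) (n := m - i)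
  have h2 : ∀ l : ℕ, wD u σ (i + l) - wD u σ (i + l + 1)
      = wD u σ (i + l) - wD u σ (i + (l + 1)) := fun l => rfl
  rw [Finset.sum_congr rfl (fun l _ => (h2 l).symm)] at h
  rw [h]
  have h4 : i + (m - i) = m := by omega
  rw [Nat.add_zero, h4, show wD u σ m = 0 from dif_neg (lt_irrefl m), sub_zero]

lemma range_filter_lt {K : ℕ} (hK : K ≤ m) :
    (Finset.range m).filter (fun k => k < K) = Finset.range K := by
  ext k
  simp only [Finset.mem_filter, Finset.mem_range]
  omega

lemma tau_eq_sum (K : ℕ) : tau pref K = ∑ k ∈ Finset.range K, lenStep pref k := by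
  induction K with
  | zero => simp [tau]
  | succ K ih => rw [Finset.sum_range_succ, ← ih]; rfl

lemma runX_succ_eq (k : ℕ) (a : Fin n) (g : Fin m) :
    runX pref (k+1) a g = runX pref k a g + lenStep pref k * rate pref k a g := by
  rw [runX_succ' pref]
  unfold rate
  by_cases hact : (psActive pref (runS pref k)).Nonempty
  · by_cases ht : psTop pref (runS pref k) a = some g
    · simp [hact, ht]
    · simp [hact, ht]
  · rw [lenStep_eq_zero pref hact]
    simp [hact]

lemma runX_eq_sum (a : Fin n) (g : Fin m) (K : ℕ) :
    runX pref K a g = ∑ k ∈ Finset.range K, lenStep pref k * rate pref k a g := by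
  induction K with
  | zero => simp [runX_zero]
  | succ K ih => rw [Finset.sum_range_succ, ← ih, runX_succ_eq]

/-- Claim A : truthful lower bound. -/
lemma valueA (hord : ∀ a, IsOrder (pref a)) (hn : 0 < n) (a : Fin n) (u : Fin m → ℝ)
    (hu : ∀ g, 0 ≤ u g) (hcons : Consistent u (pref a)) (σ : Equiv.Perm (Fin m))
    (hmono : ∀ i i' : Fin m, i ≤ i' → u (σ i') ≤ u (σ i)) :
    ∑ j ∈ Finset.range m, (wD u σ j - wD u σ (j+1)) * tau pref (stepT pref hord hn σ j)
      ≤ ∑ g, u g * runX pref m a g := by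
  have hRHS : ∑ g, u g * runX pref m a g
      = ∑ k ∈ Finset.range m, lenStep pref k * (∑ g, u g * rate pref k a g) := by
    have h1 : ∀ g : Fin m, u g * runX pref m a g
        = ∑ k ∈ Finset.range m, u g * (lenStep pref k * rate pref k a g) := by
      intro g
      rw [runX_eq_sum pref a g m, Finset.mul_sum]
    rw [Finset.sum_congr rfl (fun g _ => h1 g), Finset.sum_comm]
    apply Finset.sum_congr rfl
    intro k _
    rw [Finset.mul_sum]
    apply Finset.sum_congr rfl
    intro g _
    ring
  have hLHS : ∑ j ∈ Finset.range m, (wD u σ j - wD u σ (j+1)) * tau pref (stepT pref hord hn σ j)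
      = ∑ k ∈ Finset.range m, lenStep pref k * (∑ j ∈ Finset.range m,
          if k < stepT pref hord hn σ j then (wD u σ j - wD u σ (j+1)) else 0) := by
    have h1 : ∀ j, tau pref (stepT pref hord hn σ j)
        = ∑ k ∈ Finset.range m, (if k < stepT pref hord hn σ j then lenStep pref k else 0) := by
      intro j
      rw [tau_eq_sum]
      rw [← Finset.sum_filter, range_filter_lt (stepT_le_m pref hord hn σ j)]
    rw [Finset.sum_congr rfl (fun j _ => by rw [h1 j, Finset.mul_sum]), Finset.sum_comm]
    apply Finset.sum_congr rfl
    intro k _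
    rw [Finset.mul_sum]
    apply Finset.sum_congr rfl
    intro j _
    by_cases h : k < stepT pref hord hn σ j
    · rw [if_pos h, if_pos h]; ring
    · rw [if_neg h, if_neg h]; ring
  have hper : ∀ k ∈ Finset.range m, (∑ j ∈ Finset.range m,
      if k < stepT pref hord hn σ j then (wD u σ j - wD u σ (j+1)) else 0)
        ≤ ∑ g, u g * rate pref k a g := by
    intro k _
    have hU0 : 0 ≤ ∑ g, u g * rate pref k a g :=
      Finset.sum_nonneg (fun g _ => mul_nonneg (hu g) (rate_nonneg pref k a g))
    have hsum : (∑ j ∈ Finset.range m,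
        if k < stepT pref hord hn σ j then (wD u σ j - wD u σ (j+1)) else 0)
        = ∑ j ∈ (Finset.range m).filter (fun j => k < stepT pref hord hn σ j),
            (wD u σ j - wD u σ (j+1)) := (Finset.sum_filter _ _).symm
    rcases Finset.eq_empty_or_nonempty
        ((Finset.range m).filter (fun j => k < stepT pref hord hn σ j)) with hJe | hJne
    · rw [hsum, hJe]
      simpa using hU0
    · set J := (Finset.range m).filter (fun j => k < stepT pref hord hn σ j) with hJ
      set j₀ := J.min' hJne with hj₀def
      have hj₀ := J.min'_mem hJne
      have hj₀r : j₀ ∈ Finset.range m := (Finset.mem_filter.1 hj₀).1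
      have hj₀m : j₀ < m := Finset.mem_range.1 hj₀r
      have hj₀k : k < stepT pref hord hn σ j₀ := (Finset.mem_filter.1 hj₀).2
      have hJeq : J = Finset.Ico j₀ m := by
        ext j
        simp only [hJ, Finset.mem_filter, Finset.mem_range, Finset.mem_Ico]
        constructor
        · rintro ⟨h1, h2⟩
          exact ⟨J.min'_le j (Finset.mem_filter.2 ⟨Finset.mem_range.2 h1, h2⟩), h1⟩
        · rintro ⟨h1, h2⟩
          exact ⟨h2, lt_of_lt_of_le hj₀k (stepT_mono pref hord hn σ h1)⟩
      have htel : ∑ j ∈ Finset.Ico j₀ m, (wD u σ j - wD u σ (j+1)) = wD u σ j₀ :=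
        tele u σ j₀ (le_of_lt hj₀m)
      rw [hsum, hJeq, htel]
      obtain ⟨g, hgH, hgd⟩ := Finset.lt_sup_iff.1 hj₀k
      have hgS : g ∈ runS pref k := mem_before_death pref hord hn g hgd
      obtain ⟨g₀, hg₀⟩ := psTop_exists pref hord a ⟨g, hgS⟩
      have hUeq : ∑ g', u g' * rate pref k a g' = u g₀ := by
        unfold rate
        simp only [hg₀, Option.some.injEq]
        have hz : ∀ g', u g' * (if g₀ = g' then (1:ℝ) else 0) = if g₀ = g' then u g' else 0 := by
          intro g'
          split <;> ring
        rw [Finset.sum_congr rfl (fun g' _ => hz g'), Finset.sum_ite_eq]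
        simp
      have hle1 : u g ≤ u g₀ := by
        by_contra hcu
        push_neg at hcu
        have h1 := hcons g g₀ hcu
        have h2 := psTop_min pref hord hg₀ hgS
        omega
      have hle2 : wD u σ j₀ ≤ u g := by
        obtain ⟨i, hi, rfl⟩ := Finset.mem_image.1 hgH
        have hij : (i:ℕ) ≤ j₀ := (Finset.mem_filter.1 hi).2
        have hle := hmono i ⟨j₀, hj₀m⟩ (by rw [Fin.le_def]; exact hij)
        unfold wD
        rw [dif_pos hj₀m]
        exact hle
      rw [hUeq]
      linarith
  rw [hRHS, hLHS]
  apply Finset.sum_le_sum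
  intro k hk
  exact mul_le_mul_of_nonneg_left (hper k hk) (lenStep_nonneg pref hord k)

/-- Claim B : Abel summation. -/
lemma valueB (u : Fin m → ℝ) (σ : Equiv.Perm (Fin m)) (X : Fin m → ℝ) :
    ∑ g, u g * X g
      = ∑ j ∈ Finset.range m, (wD u σ j - wD u σ (j+1)) * (∑ g ∈ Hset σ j, X g) := by
  have h0 : ∑ g, u g * X g = ∑ i : Fin m, u (σ i) * X (σ i) :=
    (Equiv.sum_comp σ (fun g => u g * X g)).symm
  have h1 : ∀ i : Fin m, u (σ i) = ∑ j ∈ Finset.Ico (i:ℕ) m, (wD u σ j - wD u σ (j+1)) := by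
    intro i
    rw [tele u σ (i:ℕ) (le_of_lt i.isLt)]
    unfold wD
    rw [dif_pos i.isLt]
  have h2 : ∀ i : Fin m, Finset.Ico (i:ℕ) m = (Finset.range m).filter (fun j => (i:ℕ) ≤ j) := by
    intro i
    ext j
    simp only [Finset.mem_Ico, Finset.mem_filter, Finset.mem_range]
    omega
  rw [h0, Finset.sum_congr rfl (fun i _ => by rw [h1 i, Finset.sum_mul, h2 i, Finset.sum_filter])]
  rw [Finset.sum_comm]
  apply Finset.sum_congr rfl
  intro j _
  rw [Finset.mul_sum, Hset, Finset.sum_image (fun x _ y _ h => σ.injective h),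
    Finset.sum_filter]

end Final
end PS15
namespace PS15
section Final2
open Finset
open scoped Classical
variable {n m : ℕ} {pref pref' : Fin n → List (Fin m)}

/-- Claim C : manipulated prefix consumption bound. -/
lemma valueC (hord : ∀ a, IsOrder (pref a)) (hord' : ∀ a, IsOrder (pref' a)) (hn : 0 < n)
    (C : Finset (Fin n)) (hhon : ∀ b ∉ C, pref' b = pref b)
    (a : Fin n) (σ : Equiv.Perm (Fin m)) (j : ℕ) :
    ∑ g ∈ Hset σ j, runX pref' m a g
      ≤ ((C.card : ℝ) + 1) * tau pref (stepT pref hord hn σ j) := by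
  have hKm : stepT pref hord hn σ j ≤ m := stepT_le_m pref hord hn σ j
  have hT0 : 0 ≤ tau pref (stepT pref hord hn σ j) := tau_nonneg pref hord _
  have hTm : tau pref (stepT pref hord hn σ j) ≤ tau pref m := tau_mono pref hord hKm
  have htmeq : tau pref' m = tau pref m := by
    rw [tau_final pref' hord' hn, tau_final pref hord hn]
  have hTm' : tau pref (stepT pref hord hn σ j) ≤ tau pref' m := by rw [htmeq]; exact hTm
  have h0m : 0 ≤ tau pref' m := tau_nonneg pref' hord' m
  have hXf : ∀ g, runX pref' m a g = xAt pref' a g (tau pref' m) :=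
    fun g => (xAt_tau pref' hord' (le_refl m) a g).symm
  have hsplit : ∑ g ∈ Hset σ j, runX pref' m a g
      = (∑ g ∈ Hset σ j, xAt pref' a g (tau pref (stepT pref hord hn σ j)))
        + ∑ g ∈ Hset σ j, (xAt pref' a g (tau pref' m)
            - xAt pref' a g (tau pref (stepT pref hord hn σ j))) := by
    rw [← Finset.sum_add_distrib]
    apply Finset.sum_congr rfl
    intro g _
    rw [hXf g]
    ring
  have hb1 : ∑ g ∈ Hset σ j, xAt pref' a g (tau pref (stepT pref hord hn σ j))
      ≤ tau pref (stepT pref hord hn σ j) := by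
    calc ∑ g ∈ Hset σ j, xAt pref' a g (tau pref (stepT pref hord hn σ j))
        ≤ ∑ g, xAt pref' a g (tau pref (stepT pref hord hn σ j)) :=
          Finset.sum_le_sum_of_subset_of_nonneg (Finset.subset_univ _)
            (fun g _ _ => xAt_nonneg pref' hord' a g hT0)
      _ ≤ tau pref (stepT pref hord hn σ j) := xAt_sum_le pref' hord' a hT0
  have hb2 : ∀ g ∈ Hset σ j, xAt pref' a g (tau pref' m)
      - xAt pref' a g (tau pref (stepT pref hord hn σ j))
      ≤ 1 - mAt pref' g (tau pref (stepT pref hord hn σ j)) := by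
    intro g _
    have hd : xAt pref' a g (tau pref' m) - xAt pref' a g (tau pref (stepT pref hord hn σ j))
        ≤ mAt pref' g (tau pref' m) - mAt pref' g (tau pref (stepT pref hord hn σ j)) := by
      unfold mAt
      rw [← Finset.sum_sub_distrib]
      exact Finset.single_le_sum
        (f := fun b => xAt pref' b g (tau pref' m)
          - xAt pref' b g (tau pref (stepT pref hord hn σ j)))
        (fun b _ => by
          show (0:ℝ) ≤ xAt pref' b g (tau pref' m)
            - xAt pref' b g (tau pref (stepT pref hord hn σ j))
          linarith [xAt_mono pref' hord' b g hT0 hTm']) (Finset.mem_univ a)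
    have hle := mAt_le_one pref' hord' hn g h0m
    linarith
  have hdead : ∀ g ∈ Hset σ j, mAt pref g (tau pref (stepT pref hord hn σ j)) = 1 := by
    intro g hg
    have h1 : deathStep pref hord hn g ≤ stepT pref hord hn σ j := Finset.le_sup hg
    have h2 : g ∉ runS pref (stepT pref hord hn σ j) := fun hmem =>
      not_mem_at_death pref hord hn g (runS_antitone pref h1 hmem)
    rw [mAt_tau pref hord hKm]
    exact massOf_dead pref hord h2
  have hb3 : ∑ g ∈ Hset σ j, (1 - mAt pref' g (tau pref (stepT pref hord hn σ j)))
      ≤ (C.card : ℝ) * tau pref (stepT pref hord hn σ j) := by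
    calc ∑ g ∈ Hset σ j, (1 - mAt pref' g (tau pref (stepT pref hord hn σ j)))
        = ∑ g ∈ Hset σ j, (mAt pref g (tau pref (stepT pref hord hn σ j))
            - mAt pref' g (tau pref (stepT pref hord hn σ j))) := by
          apply Finset.sum_congr rfl
          intro g hg
          rw [hdead g hg]
      _ ≤ ∑ g ∈ Hset σ j, max 0 (mAt pref g (tau pref (stepT pref hord hn σ j))
            - mAt pref' g (tau pref (stepT pref hord hn σ j))) :=
          Finset.sum_le_sum (fun g _ => le_max_right _ _)
      _ ≤ ∑ g, max 0 (mAt pref g (tau pref (stepT pref hord hn σ j))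
            - mAt pref' g (tau pref (stepT pref hord hn σ j))) :=
          Finset.sum_le_sum_of_subset_of_nonneg (Finset.subset_univ _)
            (fun g _ _ => le_max_left _ _)
      _ = deficit pref pref' (tau pref (stepT pref hord hn σ j)) := rfl
      _ ≤ (C.card : ℝ) * tau pref (stepT pref hord hn σ j) :=
          deficit_le hord hord' hn C hhon _ hT0 hTm
  have hb2' : ∑ g ∈ Hset σ j, (xAt pref' a g (tau pref' m)
      - xAt pref' a g (tau pref (stepT pref hord hn σ j)))
      ≤ ∑ g ∈ Hset σ j, (1 - mAt pref' g (tau pref (stepT pref hord hn σ j))) :=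
    Finset.sum_le_sum hb2
  rw [hsplit]
  have := hb3
  linarith [hb1, hb2', hb3]

end Final2
end PS15


open PS15 in
/-- SGIR upper bound `c + 1` for Probabilistic Serial. -/
theorem stmt15 (c : ℕ) (hc : 1 ≤ c) (n m : ℕ) (hn : 0 < n)
    (v : Fin n → Fin m → ℝ) (hv : ∀ a g, 0 ≤ v a g)
    (pref pref' : Fin n → List (Fin m))
    (horder : ∀ a, IsOrder (pref a)) (horder' : ∀ a, IsOrder (pref' a))
    (hcons : ∀ a, Consistent (v a) (pref a))
    (C : Finset (Fin n)) (hC : C.card ≤ c)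
    (hhonest : ∀ a ∉ C, pref' a = pref a)
    (hbetter : ∀ a ∈ C,
      (∑ g, v a g * psAlloc pref a g) ≤ ∑ g, v a g * psAlloc pref' a g) :
    ∀ a ∈ C, (∑ g, v a g * psAlloc pref' a g) ≤
      ((c : ℝ) + 1) * ∑ g, v a g * psAlloc pref a g := by
  intro a _
  have hγ : (C.card : ℝ) ≤ (c : ℝ) := by exact_mod_cast hC
  set σ : Equiv.Perm (Fin m) := Tuple.sort (fun i : Fin m => - v a i) with hσ
  have hmono : ∀ i i' : Fin m, i ≤ i' → v a (σ i') ≤ v a (σ i) := by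
    intro i i' h
    have h2 := Tuple.monotone_sort (fun i : Fin m => - v a i) h
    simp only [Function.comp_apply] at h2
    rw [← hσ] at h2
    linarith
  have hd : ∀ j ∈ Finset.range m, 0 ≤ wD (v a) σ j - wD (v a) σ (j+1) := by
    intro j hj
    have hjm := Finset.mem_range.1 hj
    by_cases h1 : j + 1 < m
    · unfold wD
      rw [dif_pos hjm, dif_pos h1]
      have := hmono ⟨j, hjm⟩ ⟨j+1, h1⟩ (Fin.mk_le_mk.2 (by omega))
      linarith
    · unfold wD
      rw [dif_pos hjm, dif_neg h1]
      linarith [hv a (σ ⟨j, hjm⟩)]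
  have hA := valueA pref horder hn a (v a) (hv a) (hcons a) σ hmono
  have hB := valueB (m := m) (v a) σ (runX pref' m a)
  have hCC : ∀ j ∈ Finset.range m, ∑ g ∈ Hset σ j, runX pref' m a g
      ≤ ((C.card : ℝ) + 1) * tau pref (stepT pref horder hn σ j) :=
    fun j _ => valueC horder horder' hn C hhonest a σ j
  have hval_nonneg : 0 ≤ ∑ g, v a g * runX pref m a g :=
    Finset.sum_nonneg (fun g _ => mul_nonneg (hv a g) (runX_nonneg pref horder m a g))
  have hmain : (∑ g, v a g * runX pref' m a g)
      ≤ ((C.card : ℝ) + 1) * ∑ g, v a g * runX pref m a g := by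
    calc ∑ g, v a g * runX pref' m a g
        = ∑ j ∈ Finset.range m, (wD (v a) σ j - wD (v a) σ (j+1))
            * (∑ g ∈ Hset σ j, runX pref' m a g) := hB
      _ ≤ ∑ j ∈ Finset.range m, (wD (v a) σ j - wD (v a) σ (j+1))
            * (((C.card : ℝ) + 1) * tau pref (stepT pref horder hn σ j)) :=
          Finset.sum_le_sum (fun j hj => mul_le_mul_of_nonneg_left (hCC j hj) (hd j hj))
      _ = ((C.card : ℝ) + 1) * ∑ j ∈ Finset.range m, (wD (v a) σ j - wD (v a) σ (j+1))
            * tau pref (stepT pref horder hn σ j) := by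
          rw [Finset.mul_sum]
          apply Finset.sum_congr rfl
          intro j _
          ring
      _ ≤ ((C.card : ℝ) + 1) * ∑ g, v a g * runX pref m a g :=
          mul_le_mul_of_nonneg_left hA (by positivity)
  have hfinal : ((C.card : ℝ) + 1) * ∑ g, v a g * runX pref m a g
      ≤ ((c : ℝ) + 1) * ∑ g, v a g * runX pref m a g :=
    mul_le_mul_of_nonneg_right (by linarith) hval_nonneg
  have e1 : (∑ g, v a g * psAlloc pref' a g) = ∑ g, v a g * runX pref' m a g := rfl
  have e2 : (∑ g, v a g * psAlloc pref a g) = ∑ g, v a g * runX pref m a g := rfl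
  rw [e1, e2]
  linarith
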